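/- Let Γ be a finite tree with vertex weights w(v) ∈ ℤ_{<0} satisfying −w(v) ≥ ν(v) for every vertex v, where ν(v) is the valence of v (Spivakovsky's characterization of minimal singularity graphs). Then the associated intersection matrix M, with M_{vv} = w(v) and M_{vw} = 1 if v,w are adjacent and 0 otherwise, is negative definite. -/

import Mathlib

open Matrix

/-- Let `Γ` be a finite connected tree with integer vertex weights
`w(v) ≤ -1` satisfying `-w(v) ≥ ν(v)` (valence) for every vertex, with strict
inequality at some vertex (Spivakovsky's characterization of minimal singularity
graphs). Then the associated intersection matrix `M` (with `M_{vv} = w(v)`,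
`M_{vw} = 1` if `v ~ w`, else `0`) is negative definite: `xᵀ M x < 0` for every
nonzero real vector `x`. -/
theorem stmt6 {V : Type*} [Fintype V] [DecidableEq V]
    (G : SimpleGraph V) [DecidableRel G.Adj] (hT : G.IsTree)
    (w : V → ℤ) (hneg : ∀ v, w v < 0)
    (hw : ∀ v, (G.degree v : ℤ) ≤ -w v)
    (hstrict : ∃ v, (G.degree v : ℤ) < -w v) :
    ∀ x : V → ℝ, x ≠ 0 →
      x ⬝ᵥ (Matrix.of fun v u : V =>
        if v = u then (w v : ℝ) else if G.Adj v u then 1 else 0).mulVec x < 0 := by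
  intro x hx
  set M : Matrix V V ℝ := Matrix.of fun v u : V =>
      if v = u then (w v : ℝ) else if G.Adj v u then 1 else 0 with hM
  have hMeq : M = Matrix.diagonal (fun v => (w v : ℝ) + G.degree v) - G.lapMatrix ℝ := by
    ext v u
    by_cases h : v = u
    · subst h
      simp [hM, SimpleGraph.lapMatrix, SimpleGraph.degMatrix, Matrix.diagonal]
    · simp [hM, h, SimpleGraph.lapMatrix, SimpleGraph.degMatrix, Matrix.diagonal,
        SimpleGraph.adjMatrix, Ne.symm h]
  have hsplit : x ⬝ᵥ M.mulVec x
      = (∑ v, ((w v : ℝ) + G.degree v) * (x v)^2) - x ⬝ᵥ (G.lapMatrix ℝ).mulVec x := by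
    rw [hMeq, sub_mulVec, dotProduct_sub]
    congr 1
    simp only [dotProduct, mulVec_diagonal]
    exact Finset.sum_congr rfl fun v _ => by ring
  have hL : (0:ℝ) ≤ x ⬝ᵥ (G.lapMatrix ℝ).mulVec x := by
    have := (G.posSemidef_lapMatrix ℝ).dotProduct_mulVec_nonneg x
    simpa [dotProduct, Matrix.mulVec] using this
  have hterm : ∀ v, ((w v : ℝ) + G.degree v) * (x v)^2 ≤ 0 := by
    intro v
    apply mul_nonpos_of_nonpos_of_nonneg
    · have h' : (G.degree v : ℝ) ≤ -(w v : ℝ) := by exact_mod_cast hw v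
      linarith
    · positivity
  have hsum : (∑ v, ((w v : ℝ) + G.degree v) * (x v)^2) ≤ 0 :=
    Finset.sum_nonpos fun v _ => hterm v
  rw [hsplit]
  rcases lt_or_eq_of_le hsum with h | h
  · linarith
  rcases lt_or_eq_of_le hL with h2 | h2
  · linarith
  exfalso
  -- from h : sum = 0 and h2 : 0 = Q, derive x = 0
  have hconst : ∀ i j : V, x i = x j := by
    have hz : Matrix.toLinearMap₂' ℝ (G.lapMatrix ℝ) x x = 0 := by
      rw [Matrix.toLinearMap₂'_apply']; exact h2.symm
    rw [G.lapMatrix_toLinearMap₂'_apply'_eq_zero_iff_forall_reachable] at hz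
    intro i j
    exact hz i j (hT.1 i j)
  obtain ⟨v0, hv0⟩ := hstrict
  have hzero : ∀ v ∈ Finset.univ, ((w v : ℝ) + G.degree v) * (x v)^2 = 0 :=
    (Finset.sum_eq_zero_iff_of_nonpos fun v _ => hterm v).mp h
  have hc : ((w v0 : ℝ) + G.degree v0) < 0 := by
    have h' : (G.degree v0 : ℝ) < -(w v0 : ℝ) := by exact_mod_cast hv0
    linarith
  have hx0 : x v0 = 0 := by
    have := hzero v0 (Finset.mem_univ v0)
    rcases mul_eq_zero.mp this with hc' | hs
    · exact absurd hc' (ne_of_lt hc)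
    · exact pow_eq_zero_iff (two_ne_zero) |>.mp hs
  apply hx
  funext u
  simp [hconst u v0, hx0]
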